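/- Conversely, any feasible cluster-level point (u_t, p_t, r⁺_t, r⁻_t) with u_t ∈ {0,…,G}, p_t, r⁺_t, r⁻_t ≥ 0, p_t + r⁺_t ≤ (P̄ − P_) u_t, and p_t − r⁻_t ≥ 0 can be disaggregated into individual-unit variables: there exist ũ_{g,t} ∈ {0,1} (ordered: ũ_{g+1,t} ≤ ũ_{g,t}) and p̃_{g,t}, r̃⁺_{g,t}, r̃⁻_{g,t} ≥ 0 with p̃_{g,t} + r̃⁺_{g,t} ≤ (P̄ − P_) ũ_{g,t}, p̃_{g,t} ≥ r̃⁻_{g,t}, and sums equal to u_t, p_t, r⁺_t, r⁻_t respectively. -/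

import Mathlib

theorem card_filter_lt_fin (G u : ℕ) (hu : u ≤ G) :
    (Finset.univ.filter fun g : Fin G => (g:ℕ) < u).card = u := by
  have h : (Finset.univ.filter fun g : Fin G => (g:ℕ) < u)
      = Finset.map (Fin.castLEEmb hu) Finset.univ := by
    ext g
    simp only [Finset.mem_filter, Finset.mem_univ, true_and, Finset.mem_map,
      Fin.castLEEmb, Function.Embedding.coeFn_mk]
    constructor
    · intro hg; exact ⟨⟨g, hg⟩, rfl⟩
    · rintro ⟨a, rfl⟩; exact a.2
  rw [h, Finset.card_map, Finset.card_univ, Fintype.card_fin]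

theorem sum_ite_lt_fin (G u : ℕ) (hu : u ≤ G) (c : ℝ) :
    ∑ g : Fin G, (if (g:ℕ) < u then c else 0) = u * c := by
  rw [Finset.sum_ite, Finset.sum_const, Finset.sum_const, smul_zero, add_zero,
    card_filter_lt_fin G u hu, nsmul_eq_mul]

/-- Any feasible cluster-level point can be disaggregated into individual ordered 0–1
commitments and nonnegative per-unit production/reserve variables with the same sums. -/
theorem cluster_point_disaggregates (G : ℕ) (Pmax Pmin : ℝ)
    (hPmin : 0 ≤ Pmin) (hP : Pmin < Pmax)
    (u : ℕ) (hu : u ≤ G) (p rp rm : ℝ)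
    (hp : 0 ≤ p) (hrp : 0 ≤ rp) (hrm : 0 ≤ rm)
    (hcap : p + rp ≤ (Pmax - Pmin) * u)
    (hmin : rm ≤ p) :
    ∃ ut pt rpt rmt : Fin G → ℝ,
      (∀ g, ut g = 0 ∨ ut g = 1) ∧
      (∀ (g : Fin G) (h : (g : ℕ) + 1 < G), ut ⟨(g : ℕ) + 1, h⟩ ≤ ut g) ∧
      (∀ g, 0 ≤ pt g ∧ 0 ≤ rpt g ∧ 0 ≤ rmt g) ∧
      (∀ g, pt g + rpt g ≤ (Pmax - Pmin) * ut g) ∧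
      (∀ g, rmt g ≤ pt g) ∧
      (∑ g, ut g) = u ∧ (∑ g, pt g) = p ∧ (∑ g, rpt g) = rp ∧ (∑ g, rmt g) = rm := by
  rcases Nat.eq_zero_or_pos u with hu0 | hupos
  · -- u = 0: everything is zero
    subst hu0
    have hzero : p + rp ≤ 0 := by simpa using hcap
    have hp0 : p = 0 := le_antisymm (by linarith) hp
    have hrp0 : rp = 0 := le_antisymm (by linarith) hrp
    have hrm0 : rm = 0 := le_antisymm (by linarith) hrm
    refine ⟨0, 0, 0, 0, fun g => Or.inl rfl, fun g h => le_rfl,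
      fun g => ⟨le_rfl, le_rfl, le_rfl⟩, fun g => by simp, fun g => le_rfl, ?_, ?_, ?_, ?_⟩ <;>
      simp [hp0, hrp0, hrm0]
  · -- u ≥ 1: split proportionally among the first u units
    have hune : (u : ℝ) ≠ 0 := Nat.cast_ne_zero.mpr hupos.ne'
    have hupos' : (0:ℝ) < u := Nat.cast_pos.mpr hupos
    refine ⟨fun g => if (g:ℕ) < u then 1 else 0,
      fun g => if (g:ℕ) < u then p / u else 0,
      fun g => if (g:ℕ) < u then rp / u else 0,
      fun g => if (g:ℕ) < u then rm / u else 0,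
      ?_, ?_, ?_, ?_, ?_, ?_, ?_, ?_, ?_⟩
    · intro g; by_cases h : (g:ℕ) < u <;> simp [h]
    · intro g h
      by_cases h1 : (g:ℕ) + 1 < u
      · simp [h1, Nat.lt_of_succ_lt h1]
      · by_cases h2 : (g:ℕ) < u <;> simp [h1, h2]
    · intro g
      refine ⟨?_, ?_, ?_⟩ <;> (by_cases h : (g:ℕ) < u <;> simp [h] <;> positivity)
    · intro g
      by_cases h : (g:ℕ) < u <;> simp [h]
      rw [← add_div, div_le_iff₀ hupos']
      linarith [hcap]
    · intro g
      by_cases h : (g:ℕ) < u <;> simp [h]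
      exact div_le_div_of_nonneg_right hmin hupos'.le
    · rw [sum_ite_lt_fin G u hu]; ring
    · rw [sum_ite_lt_fin G u hu]; field_simp
    · rw [sum_ite_lt_fin G u hu]; field_simp
    · rw [sum_ite_lt_fin G u hu]; field_simp
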